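/- Let K be a number field, let O be an order of K, and let f = {a ∈ O : a·x ∈ O for all x ∈ O_K} be the conductor of O, where O_K is the ring of integers of K. Then every ideal a of O with a + f = O is invertible as a fractional O-ideal, and a factors uniquely into prime ideals: there exists a unique finite multiset of prime ideals of O whose product equals a, and each prime ideal occurring in this factorization is invertible. -/

import Mathlib

set_option linter.unusedSectionVars false
open NumberField
open scoped nonZeroDivisors


/-- The conductor of an order `O` in a number field `K`: the ideal of `O` consisting of those
`a ∈ O` such that `a * x ∈ O` for every element `x` of the ring of integers of `K`
(i.e. every `x : K` integral over `ℤ`). -/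
def conductorIdeal (K : Type*) [Field K] (O : Subalgebra ℤ K) : Ideal ↥O where
  carrier := {a : ↥O | ∀ x : K, IsIntegral ℤ x → (a : K) * x ∈ O}
  add_mem' := by
    intro a b ha hb x hx
    rw [Subalgebra.coe_add, add_mul]
    exact add_mem (ha x hx) (hb x hx)
  zero_mem' := by
    intro x hx
    simpa using O.zero_mem
  smul_mem' := by
    intro c a ha x hx
    rw [smul_eq_mul, Subalgebra.coe_mul, mul_assoc]
    exact mul_mem c.2 (ha x hx)

noncomputable section

namespace OrderAux

variable {K : Type*} [Field K] [NumberField K] (O : Subalgebra ℤ K)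
variable [Module.Finite ℤ ↥O] [IsFractionRing ↥O K]

lemma mem_conductor_iff {c : ↥O} :
    c ∈ conductorIdeal K O ↔ ∀ x : K, IsIntegral ℤ x → (c : K) * x ∈ O := Iff.rfl

lemma isIntegral_coe (o : ↥O) : IsIntegral ℤ (o : K) :=
  (Algebra.IsIntegral.isIntegral (R := ℤ) o).map O.val

/-- The natural ring hom from the order into the ring of integers. -/
def toROI : ↥O →+* 𝓞 K where
  toFun o := ⟨(o : K), isIntegral_coe O o⟩
  map_one' := by ext; simp; rfl
  map_mul' x y := by ext; simp; rfl
  map_zero' := by ext; simp; rfl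
  map_add' x y := by ext; simp; rfl

@[simp] lemma coe_toROI (o : ↥O) : ((toROI O o : 𝓞 K) : K) = (o : K) := rfl

lemma algebraMap_toROI (o : ↥O) :
    algebraMap (𝓞 K) K (toROI O o) = algebraMap (↥O) K o := rfl

lemma toROI_injective : Function.Injective (toROI O) := by
  intro x y h
  have : (x : K) = y := congrArg (fun z : 𝓞 K => (z : K)) h
  exact Subtype.ext this

/-- Restriction of scalars for submodules of `K`. -/
def rho (N : Submodule (𝓞 K) K) : Submodule ↥O K where
  carrier := N
  add_mem' := N.add_mem
  zero_mem' := N.zero_mem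
  smul_mem' := by
    intro o x hx
    have h := N.smul_mem (toROI O o) hx
    have : (toROI O o) • x = o • x := by
      have h2 : algebraMap (𝓞 K) K (toROI O o) = (o : K) := coe_toROI O o
      rw [Algebra.smul_def, h2, Subalgebra.smul_def, smul_eq_mul]
    rwa [this] at h

@[simp] lemma mem_rho {N : Submodule (𝓞 K) K} {x : K} : x ∈ rho O N ↔ x ∈ N := Iff.rfl

lemma rho_mul (P Q : Submodule (𝓞 K) K) : rho O P * rho O Q = rho O (P * Q) := by
  apply le_antisymm
  · exact Submodule.mul_le.mpr fun m hm n hn =>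
      (mem_rho O).mpr (Submodule.mul_mem_mul ((mem_rho O).mp hm) ((mem_rho O).mp hn))
  · intro x hx
    have hx' : x ∈ P * Q := (mem_rho O).mp hx
    exact Submodule.mul_induction_on hx'
      (fun m hm n hn => Submodule.mul_mem_mul ((mem_rho O).mpr hm) ((mem_rho O).mpr hn))
      (fun x y hx hy => add_mem hx hy)

lemma mul_rho_eq (A : Submodule ↥O K) (Q : Submodule (𝓞 K) K) :
    A * rho O Q = rho O (Submodule.span (𝓞 K) (A : Set K) * Q) := by
  apply le_antisymm
  · exact Submodule.mul_le.mpr fun m hm n hn =>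
      (mem_rho O).mpr
        (Submodule.mul_mem_mul (Submodule.subset_span hm) ((mem_rho O).mp hn))
  · intro x hx
    have hx' : x ∈ Submodule.span (𝓞 K) (A : Set K) * Q := (mem_rho O).mp hx
    refine Submodule.mul_induction_on hx' (fun m hm => ?_)
      (fun x y hx hy => add_mem hx hy)
    induction hm using Submodule.span_induction with
    | mem z hz => exact fun n hn => Submodule.mul_mem_mul hz ((mem_rho O).mpr hn)
    | zero => exact fun n hn => by simpa using (A * rho O Q).zero_mem
    | add u v hu hv ihu ihv =>
        intro n hn
        rw [add_mul]
        exact add_mem (ihu n hn) (ihv n hn)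
    | smul r u hu ihu =>
        intro n hn
        have : (r • u) * n = u * (r • n) := by
          rw [Algebra.smul_def, Algebra.smul_def]; ring
        rw [this]
        exact ihu (r • n) (Q.smul_mem r hn)

/-- The conductor as a submodule of `K` over the ring of integers. -/
def condR : Submodule (𝓞 K) K where
  carrier := (IsLocalization.coeSubmodule K (conductorIdeal K O) : Set K)
  add_mem' := fun h1 h2 => (IsLocalization.coeSubmodule K (conductorIdeal K O)).add_mem h1 h2
  zero_mem' := (IsLocalization.coeSubmodule K (conductorIdeal K O)).zero_mem
  smul_mem' := by
    intro r x hx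
    obtain ⟨c, hc, rfl⟩ := hx
    have hrint : IsIntegral ℤ (algebraMap (𝓞 K) K r) := r.isIntegral_coe
    have hmem : (c : K) * (algebraMap (𝓞 K) K r) ∈ O := hc _ hrint
    refine ⟨⟨(c : K) * (algebraMap (𝓞 K) K r), hmem⟩, ?_, ?_⟩
    · intro y hy
      show ((c : K) * algebraMap (𝓞 K) K r) * y ∈ O
      rw [mul_assoc]
      exact hc _ (hrint.mul hy)
    · show ((c : K) * algebraMap (𝓞 K) K r) = r • algebraMap (↥O) K c
      rw [Algebra.smul_def, show (algebraMap (↥O) K) c = (c : K) from rfl]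
      ring

lemma rho_condR : rho O (condR O) = IsLocalization.coeSubmodule K (conductorIdeal K O) := rfl

lemma condR_le_one : rho O (condR O) ≤ 1 := by
  rintro x ⟨c, hc, rfl⟩
  rw [Submodule.one_eq_range]
  exact ⟨c, rfl⟩

lemma coeSubmodule_le_one (a : Ideal ↥O) : IsLocalization.coeSubmodule K a ≤ 1 := by
  rintro x ⟨c, hc, rfl⟩
  rw [Submodule.one_eq_range]
  exact ⟨c, rfl⟩

lemma span_coeSubmodule (a : Ideal ↥O) :
    Submodule.span (𝓞 K) ((IsLocalization.coeSubmodule K a : Submodule ↥O K) : Set K)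
      = IsLocalization.coeSubmodule K (Ideal.map (toROI O) a) := by
  rw [Ideal.map, IsLocalization.coeSubmodule_span]
  congr 1
  ext x
  constructor
  · rintro ⟨o, ho, rfl⟩
    exact ⟨toROI O o, ⟨o, ho, rfl⟩, (algebraMap_toROI O o).symm⟩
  · rintro ⟨z, ⟨o, ho, rfl⟩, rfl⟩
    exact ⟨o, ho, algebraMap_toROI O o⟩

lemma map_toROI_ne_bot {a : Ideal ↥O} (ha : a ≠ ⊥) : Ideal.map (toROI O) a ≠ ⊥ := by
  intro h
  apply ha
  rw [eq_bot_iff]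
  intro x hx
  have : toROI O x ∈ Ideal.map (toROI O) a := Ideal.mem_map_of_mem _ hx
  rw [h, Ideal.mem_bot] at this
  have : toROI O x = toROI O 0 := by simpa using this
  simpa using toROI_injective O this

end OrderAux

namespace OrderAux

variable {K : Type*} [Field K] [NumberField K] (O : Subalgebra ℤ K)
variable [Module.Finite ℤ ↥O] [IsFractionRing ↥O K]

lemma main_computation {a : Ideal ↥O} (ha : a ≠ ⊥) (B : Submodule (𝓞 K) K)
    (hAB : IsLocalization.coeSubmodule K (Ideal.map (toROI O) a) * B = 1) :
    IsLocalization.coeSubmodule K a * (rho O (condR O) * rho O B + 1)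
      = rho O (condR O) + IsLocalization.coeSubmodule K a := by
  rw [mul_add, mul_one, rho_mul, mul_rho_eq, span_coeSubmodule]
  congr 1
  rw [show IsLocalization.coeSubmodule K (Ideal.map (toROI O) a) * (condR O * B)
        = condR O * (IsLocalization.coeSubmodule K (Ideal.map (toROI O) a) * B) by ring,
      hAB, mul_one]

lemma invertible_of_coprime (a : Ideal ↥O) (ha : a ≠ ⊥)
    (hcop : a ⊔ conductorIdeal K O = ⊤) :
    ∃ I : FractionalIdeal (↥O)⁰ K, (a : FractionalIdeal (↥O)⁰ K) * I = 1 := by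
  have hextne : Ideal.map (toROI O) a ≠ ⊥ := map_toROI_ne_bot O ha
  have hA0 : (Ideal.map (toROI O) a : FractionalIdeal ((𝓞 K))⁰ K) ≠ 0 := by
    simpa using hextne
  set B : Submodule (𝓞 K) K :=
    ((((Ideal.map (toROI O) a : FractionalIdeal ((𝓞 K))⁰ K))⁻¹ : FractionalIdeal ((𝓞 K))⁰ K) :
      Submodule (𝓞 K) K)
    with hB
  have hAB : IsLocalization.coeSubmodule K (Ideal.map (toROI O) a) * B = 1 := by
    rw [hB, ← FractionalIdeal.coe_coeIdeal, ← FractionalIdeal.coe_mul,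
      mul_inv_cancel₀ hA0, FractionalIdeal.coe_one]
  set N : Submodule ↥O K := rho O (condR O) * rho O B + 1 with hN
  have hmain : IsLocalization.coeSubmodule K a * N
      = rho O (condR O) + IsLocalization.coeSubmodule K a :=
    main_computation O ha B hAB
  have hle1 : rho O (condR O) + IsLocalization.coeSubmodule K a ≤ 1 := by
    rw [Submodule.add_eq_sup]
    exact sup_le (condR_le_one O) (coeSubmodule_le_one O a)
  obtain ⟨α, hαa, hα0⟩ := Submodule.exists_mem_ne_zero_of_ne_bot ha
  have hfrac : IsFractional (↥O)⁰ N := by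
    refine ⟨α, mem_nonZeroDivisors_of_ne_zero hα0, fun x hx => ?_⟩
    have hmem : (α : K) * x ∈ IsLocalization.coeSubmodule K a * N :=
      Submodule.mul_mem_mul ⟨α, hαa, rfl⟩ hx
    rw [hmain] at hmem
    have := hle1 hmem
    rw [Submodule.one_eq_range] at this
    obtain ⟨y, hy⟩ := this
    refine ⟨y, ?_⟩
    rw [Subalgebra.smul_def, smul_eq_mul]
    exact hy
  refine ⟨⟨N, hfrac⟩, ?_⟩
  apply FractionalIdeal.coeToSubmodule_injective
  show ((↑a * (show FractionalIdeal (↥O)⁰ K from ⟨N, hfrac⟩) : FractionalIdeal (↥O)⁰ K) : Submodule ↥O K)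
      = ((1 : FractionalIdeal (↥O)⁰ K) : Submodule ↥O K)
  rw [FractionalIdeal.coe_mul, FractionalIdeal.coe_coeIdeal, FractionalIdeal.coe_one]
  show IsLocalization.coeSubmodule K a * N = 1
  rw [hmain, rho_condR, Submodule.add_eq_sup, ← IsLocalization.coeSubmodule_sup,
    sup_comm, hcop, IsLocalization.coeSubmodule_top]

end OrderAux

lemma idealAssociated_eq {R : Type*} [CommSemiring R] {I J : Ideal R} (h : Associated I J) :
    I = J := by
  obtain ⟨u, rfl⟩ := h
  rw [Ideal.isUnit_iff.mp u.isUnit, Ideal.mul_top]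

lemma map_multisetProd {R S : Type*} [CommRing R] [CommRing S] (f : R →+* S)
    (s : Multiset (Ideal R)) :
    Ideal.map f s.prod = (s.map (Ideal.map f)).prod := by
  induction s using Multiset.induction_on with
  | empty => simp [Ideal.one_eq_top, Ideal.map_top]
  | cons I s ih => rw [Multiset.prod_cons, Ideal.map_mul, ih, Multiset.map_cons,
      Multiset.prod_cons]

namespace OrderAux

variable {K : Type*} [Field K] [NumberField K] (O : Subalgebra ℤ K)
variable [Module.Finite ℤ ↥O] [IsFractionRing ↥O K]

lemma conductor_mul_mem {a : Ideal ↥O} {c : ↥O} (hc : c ∈ conductorIdeal K O)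
    {x : 𝓞 K} (hx : x ∈ Ideal.map (toROI O) a) :
    (c : K) * (algebraMap (𝓞 K) K x)
      ∈ IsLocalization.coeSubmodule K a * rho O (condR O) := by
  have hstable : ∀ (r : 𝓞 K) (y : K),
      y ∈ IsLocalization.coeSubmodule K a * rho O (condR O) →
      (algebraMap (𝓞 K) K r) * y
        ∈ IsLocalization.coeSubmodule K a * rho O (condR O) := by
    intro r y hy
    rw [mul_rho_eq] at hy ⊢
    have h2 := (Submodule.span (𝓞 K)
      ((IsLocalization.coeSubmodule K a : Submodule ↥O K) : Set K)
        * condR O).smul_mem r ((mem_rho O).mp hy)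
    rw [Algebra.smul_def] at h2
    exact (mem_rho O).mpr h2
  have hx' : x ∈ Submodule.span (𝓞 K) ((toROI O) '' a) := hx
  clear hx
  induction hx' using Submodule.span_induction with
  | mem z hz =>
      obtain ⟨o, ho, rfl⟩ := hz
      have heq : (c : K) * (algebraMap (𝓞 K) K (toROI O o))
          = (algebraMap (↥O) K o) * (algebraMap (↥O) K c) := by
        rw [algebraMap_toROI, show algebraMap (↥O) K c = (c : K) from rfl]
        ring
      rw [heq]
      exact Submodule.mul_mem_mul ⟨o, ho, rfl⟩ ((mem_rho O).mpr ⟨c, hc, rfl⟩)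
  | zero => simpa using Submodule.zero_mem _
  | add u v hu hv ihu ihv => rw [map_add, mul_add]; exact add_mem ihu ihv
  | smul r u hu ihu =>
      have heq : (c : K) * (algebraMap (𝓞 K) K (r • u))
          = (algebraMap (𝓞 K) K r) * ((c : K) * algebraMap (𝓞 K) K u) := by
        rw [smul_eq_mul, map_mul]; ring
      rw [heq]
      exact hstable r _ ihu

lemma mul_rho_cond_le (a : Ideal ↥O) :
    IsLocalization.coeSubmodule K a * rho O (condR O)
      ≤ IsLocalization.coeSubmodule K a := by
  refine Submodule.mul_le.mpr fun m hm n hn => ?_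
  obtain ⟨y, hy, rfl⟩ := (mem_rho O).mp hn
  have heq : m * (Algebra.linearMap (↥O) K) y = y • m := by
    rw [Algebra.linearMap_apply, Subalgebra.smul_def, smul_eq_mul,
      show algebraMap (↥O) K y = (y : K) from rfl]
    ring
  rw [heq]
  exact Submodule.smul_mem _ y hm

lemma comap_map_of_coprime {a : Ideal ↥O} (hcop : a ⊔ conductorIdeal K O = ⊤) :
    Ideal.comap (toROI O) (Ideal.map (toROI O) a) = a := by
  refine le_antisymm ?_ Ideal.le_comap_map
  intro o ho
  rw [Ideal.mem_comap] at ho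
  have h1 : (1 : ↥O) ∈ a ⊔ conductorIdeal K O := by rw [hcop]; trivial
  obtain ⟨α, hα, c, hc, hsum⟩ := Submodule.mem_sup.mp h1
  have hterm : (c : K) * algebraMap (𝓞 K) K (toROI O o)
      ∈ IsLocalization.coeSubmodule K a * rho O (condR O) :=
    conductor_mul_mem O hc ho
  have hterm' : (c : K) * (o : K) ∈ IsLocalization.coeSubmodule K a :=
    mul_rho_cond_le O a (by rwa [algebraMap_toROI O o] at hterm)
  have hoK : (o : K) ∈ IsLocalization.coeSubmodule K a := by
    have hsplit : (o : K) = algebraMap (↥O) K (α * o) + (c : K) * (o : K) := by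
      rw [show algebraMap (↥O) K (α * o) = (α : K) * (o : K) from rfl]
      have : ((α : K) + (c : K)) = 1 := by
        rw [← Subalgebra.coe_add, hsum, Subalgebra.coe_one]
      calc (o : K) = ((α : K) + (c : K)) * (o : K) := by rw [this, one_mul]
        _ = (α : K) * (o : K) + (c : K) * (o : K) := by ring
    rw [hsplit]
    exact Submodule.add_mem _ ⟨α * o, Ideal.mul_mem_right o a hα, rfl⟩ hterm'
  obtain ⟨y, hy, hval⟩ := hoK
  have : y = o := Subtype.ext hval
  rwa [this] at hy

lemma exists_conductor_mul {c : ↥O} (hc : c ∈ conductorIdeal K O) (x : 𝓞 K) :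
    ∃ o : ↥O, toROI O o = toROI O c * x := by
  refine ⟨⟨(c : K) * (algebraMap (𝓞 K) K x), hc _ x.isIntegral_coe⟩, ?_⟩
  apply NumberField.RingOfIntegers.ext
  rw [show ((toROI O c * x : 𝓞 K) : K)
      = ((toROI O c : 𝓞 K) : K) * (algebraMap (𝓞 K) K x) from map_mul _ _ _]
  rfl

lemma isPrime_map {p : Ideal ↥O} (hp : p.IsPrime)
    (hcop : p ⊔ conductorIdeal K O = ⊤) : (Ideal.map (toROI O) p).IsPrime := by
  have hcm := comap_map_of_coprime O hcop
  have h1 : (1 : ↥O) ∈ p ⊔ conductorIdeal K O := by rw [hcop]; trivial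
  obtain ⟨α, hα, c, hc, hsum⟩ := Submodule.mem_sup.mp h1
  have key : ∀ x : 𝓞 K, ∃ o : ↥O, toROI O o = toROI O c * x ∧
      (x ∈ Ideal.map (toROI O) p ↔ o ∈ p) := by
    intro x
    obtain ⟨o, horef⟩ := exists_conductor_mul O hc x
    refine ⟨o, horef, ?_⟩
    constructor
    · intro hx
      have : toROI O o ∈ Ideal.map (toROI O) p := by
        rw [horef]; exact Ideal.mul_mem_left _ _ hx
      rw [← hcm]; exact this
    · intro hop
      have hxdec : x = toROI O α * x + toROI O o := by
        rw [horef, ← add_mul, ← map_add, hsum, map_one, one_mul]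
      rw [hxdec]
      exact Ideal.add_mem _
        (Ideal.mul_mem_right _ _ (Ideal.mem_map_of_mem _ hα))
        (Ideal.mem_map_of_mem _ hop)
  constructor
  · intro htop
    apply hp.ne_top
    rw [← hcm, htop, Ideal.comap_top]
  · intro x y hxy
    obtain ⟨ox, hox, hiffx⟩ := key x
    obtain ⟨oy, hoy, hiffy⟩ := key y
    have : toROI O (c * (ox * oy)) ∈ Ideal.map (toROI O) p := by
      rw [map_mul, map_mul, hox, hoy,
        show toROI O c * (toROI O c * x * (toROI O c * y))
          = toROI O c * toROI O c * toROI O c * (x * y) by ring]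
      exact Ideal.mul_mem_left _ _ hxy
    have hmem : c * (ox * oy) ∈ p := by rw [← hcm]; exact this
    rcases hp.mem_or_mem hmem with h | h
    ·
      -- 1 = α + c ∈ p, contradiction
      exfalso
      apply hp.ne_top
      rw [Ideal.eq_top_iff_one, ← hsum]
      exact Ideal.add_mem _ hα h
    · rcases hp.mem_or_mem h with h' | h'
      · exact Or.inl (hiffx.mpr h')
      · exact Or.inr (hiffy.mpr h')

lemma map_comap_of_coprime (P : Ideal (𝓞 K))
    (hcop : Ideal.comap (toROI O) P ⊔ conductorIdeal K O = ⊤) :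
    Ideal.map (toROI O) (Ideal.comap (toROI O) P) = P := by
  refine le_antisymm Ideal.map_comap_le ?_
  intro x hx
  have h1 : (1 : ↥O) ∈ Ideal.comap (toROI O) P ⊔ conductorIdeal K O := by
    rw [hcop]; trivial
  obtain ⟨α, hα, c, hc, hsum⟩ := Submodule.mem_sup.mp h1
  obtain ⟨o, ho⟩ := exists_conductor_mul O hc x
  have hxdec : x = toROI O α * x + toROI O o := by
    rw [ho, ← add_mul, ← map_add, hsum, map_one, one_mul]
  have hoP : o ∈ Ideal.comap (toROI O) P := by
    rw [Ideal.mem_comap, ho]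
    exact Ideal.mul_mem_left _ _ hx
  rw [hxdec]
  exact Ideal.add_mem _
    (Ideal.mul_mem_right _ _ (Ideal.mem_map_of_mem _ hα))
    (Ideal.mem_map_of_mem _ hoP)

end OrderAux

namespace OrderAux

variable {K : Type*} [Field K] [NumberField K] (O : Subalgebra ℤ K)
variable [Module.Finite ℤ ↥O] [IsFractionRing ↥O K]

lemma coprime_of_ge {a b : Ideal ↥O} (h : a ≤ b)
    (hcop : a ⊔ conductorIdeal K O = ⊤) : b ⊔ conductorIdeal K O = ⊤ :=
  eq_top_iff.mpr (hcop ▸ sup_le_sup_right h _)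

lemma facts_of_mem_factorization {a : Ideal ↥O} (ha : a ≠ ⊥)
    (hcop : a ⊔ conductorIdeal K O = ⊤)
    {s : Multiset (Ideal ↥O)} (hsprod : s.prod = a) {P : Ideal ↥O} (hP : P ∈ s) :
    a ≤ P ∧ P ⊔ conductorIdeal K O = ⊤ ∧ P ≠ ⊥ := by
  have hle : a ≤ P := hsprod ▸ Ideal.le_of_dvd (Multiset.dvd_prod hP)
  have hc : P ⊔ conductorIdeal K O = ⊤ := coprime_of_ge O hle hcop
  have hne : P ≠ ⊥ := fun h => ha (le_bot_iff.mp (h ▸ hle))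
  exact ⟨hle, hc, hne⟩

lemma exists_factorization {a : Ideal ↥O} (ha : a ≠ ⊥)
    (hcop : a ⊔ conductorIdeal K O = ⊤) :
    ∃ s : Multiset (Ideal ↥O), (∀ P ∈ s, P.IsPrime) ∧ s.prod = a := by
  have hextne : Ideal.map (toROI O) a ≠ ⊥ := map_toROI_ne_bot O ha
  obtain ⟨T, hTprime, hTassoc⟩ :=
    UniqueFactorizationMonoid.exists_prime_factors (Ideal.map (toROI O) a) hextne
  have hTprod : T.prod = Ideal.map (toROI O) a := idealAssociated_eq hTassoc
  have hQfacts : ∀ Q ∈ T, (Ideal.comap (toROI O) Q) ⊔ conductorIdeal K O = ⊤ := by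
    intro Q hQ
    have hle : Ideal.map (toROI O) a ≤ Q :=
      Ideal.le_of_dvd (hTprod ▸ Multiset.dvd_prod hQ)
    have haleq : a ≤ Ideal.comap (toROI O) Q :=
      le_trans Ideal.le_comap_map (Ideal.comap_mono hle)
    exact coprime_of_ge O haleq hcop
  refine ⟨T.map (Ideal.comap (toROI O)), ?_, ?_⟩
  · intro P hP
    obtain ⟨Q, hQ, rfl⟩ := Multiset.mem_map.mp hP
    have : Q.IsPrime := Ideal.isPrime_of_prime (hTprime Q hQ)
    exact this.comap _
  · -- product equals a
    have hmapprod : Ideal.map (toROI O) ((T.map (Ideal.comap (toROI O))).prod)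
        = Ideal.map (toROI O) a := by
      rw [map_multisetProd, Multiset.map_map]
      have : T.map (Ideal.map (toROI O) ∘ Ideal.comap (toROI O)) = T.map id :=
        Multiset.map_congr rfl fun Q hQ => map_comap_of_coprime O Q (hQfacts Q hQ)
      rw [this, Multiset.map_id, hTprod]
    have hprodcop : (T.map (Ideal.comap (toROI O))).prod ⊔ conductorIdeal K O = ⊤ := by
      rw [sup_comm]
      refine Ideal.sup_multiset_prod_eq_top fun p hp => ?_
      obtain ⟨Q, hQ, rfl⟩ := Multiset.mem_map.mp hp
      rw [sup_comm]
      exact hQfacts Q hQ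
    calc (T.map (Ideal.comap (toROI O))).prod
        = Ideal.comap (toROI O)
            (Ideal.map (toROI O) ((T.map (Ideal.comap (toROI O))).prod)) :=
          (comap_map_of_coprime O hprodcop).symm
      _ = Ideal.comap (toROI O) (Ideal.map (toROI O) a) := by rw [hmapprod]
      _ = a := comap_map_of_coprime O hcop

lemma factorization_unique {a : Ideal ↥O} (ha : a ≠ ⊥)
    (hcop : a ⊔ conductorIdeal K O = ⊤)
    {s t : Multiset (Ideal ↥O)}
    (hs : ∀ P ∈ s, P.IsPrime) (hsprod : s.prod = a)
    (ht : ∀ P ∈ t, P.IsPrime) (htprod : t.prod = a) : s = t := by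
  have hSprime : ∀ u : Multiset (Ideal ↥O), (∀ P ∈ u, P.IsPrime) → u.prod = a →
      ∀ Q ∈ u.map (Ideal.map (toROI O)), Prime Q := by
    intro u hu huprod Q hQ
    obtain ⟨P, hP, rfl⟩ := Multiset.mem_map.mp hQ
    obtain ⟨hle, hc, hne⟩ := facts_of_mem_factorization O ha hcop huprod hP
    exact Ideal.prime_of_isPrime (map_toROI_ne_bot O hne) (isPrime_map O (hu P hP) hc)
  have hSprod : ∀ u : Multiset (Ideal ↥O), u.prod = a →
      (u.map (Ideal.map (toROI O))).prod = Ideal.map (toROI O) a := by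
    intro u huprod
    rw [← map_multisetProd, huprod]
  have hrel : Multiset.Rel Associated (s.map (Ideal.map (toROI O)))
      (t.map (Ideal.map (toROI O))) := by
    refine prime_factors_unique (hSprime s hs hsprod) (hSprime t ht htprod) ?_
    rw [hSprod s hsprod, hSprod t htprod]
    exact Associated.refl _
  have heq : s.map (Ideal.map (toROI O)) = t.map (Ideal.map (toROI O)) :=
    Multiset.rel_eq.mp (hrel.mono fun x _ y _ h => idealAssociated_eq h)
  have hids : ∀ u : Multiset (Ideal ↥O), (∀ P ∈ u, P.IsPrime) → u.prod = a →
      (u.map (Ideal.map (toROI O))).map (Ideal.comap (toROI O)) = u := by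
    intro u hu huprod
    rw [Multiset.map_map]
    have : u.map (Ideal.comap (toROI O) ∘ Ideal.map (toROI O)) = u.map id :=
      Multiset.map_congr rfl fun P hP =>
        comap_map_of_coprime O (facts_of_mem_factorization O ha hcop huprod hP).2.1
    rw [this, Multiset.map_id]
  calc s = (s.map (Ideal.map (toROI O))).map (Ideal.comap (toROI O)) :=
        (hids s hs hsprod).symm
    _ = (t.map (Ideal.map (toROI O))).map (Ideal.comap (toROI O)) := by rw [heq]
    _ = t := hids t ht htprod

end OrderAux

/-- Let `K` be a number field, `O` an order of `K` and `f` its conductor.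
Every nonzero ideal `a` of `O` with `a + f = O` is invertible as a fractional `O`-ideal, it
factors uniquely into prime ideals (there is a unique multiset of prime ideals of `O` whose
product is `a`), and every prime ideal occurring in such a factorization is invertible. -/
theorem order_ideal_coprime_conductor_invertible_and_unique_factorization
    (K : Type*) [Field K] [NumberField K] (O : Subalgebra ℤ K)
    [Module.Finite ℤ ↥O] [IsFractionRing ↥O K]
    (a : Ideal ↥O) (ha : a ≠ ⊥) (hcop : a ⊔ conductorIdeal K O = ⊤) :
    (∃ I : FractionalIdeal (nonZeroDivisors ↥O) K,
        (a : FractionalIdeal (nonZeroDivisors ↥O) K) * I = 1) ∧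
    (∃! s : Multiset (Ideal ↥O), (∀ P ∈ s, P.IsPrime) ∧ s.prod = a) ∧
    (∀ s : Multiset (Ideal ↥O), (∀ P ∈ s, P.IsPrime) → s.prod = a →
      ∀ P ∈ s, ∃ I : FractionalIdeal (nonZeroDivisors ↥O) K,
        (P : FractionalIdeal (nonZeroDivisors ↥O) K) * I = 1) := by
  refine ⟨OrderAux.invertible_of_coprime O a ha hcop, ?_, ?_⟩
  · obtain ⟨s, hs, hsprod⟩ := OrderAux.exists_factorization O ha hcop
    exact ⟨s, ⟨hs, hsprod⟩, fun t ⟨ht, htprod⟩ =>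
      OrderAux.factorization_unique O ha hcop ht htprod hs hsprod⟩
  · intro s hs hsprod P hP
    obtain ⟨hle, hc, hne⟩ :=
      OrderAux.facts_of_mem_factorization O ha hcop hsprod hP
    exact OrderAux.invertible_of_coprime O P hne hc
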